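/- Identify characters of E with filters via indicator functions. The map φ : (ℕ∪{∞})² → Ê_∞ sending k to the character 1_{A_{Λ(k)}} is a homeomorphism, where (ℕ∪{∞})² carries the product topology of two copies of the one-point compactification of ℕ, and Ê_∞ ⊆ {0,1}^E carries the subspace product topology. -/

import Mathlib

open ContinuousLinearMap
open scoped Classical

noncomputable section

namespace SOq

variable {H : Type} [NormedAddCommGroup H] [InnerProductSpace ℂ H] [CompleteSpace H]

/-- `pj A = 1 - A* A`; for the left shift this is the rank-one projection onto `e 0`. -/
def pj (A : H →L[ℂ] H) : H →L[ℂ] H := 1 - adjoint A * A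

/-- `B₁(r,n,m) = S*^{n₁} S^{m₁} ⊗ S*^{n₁} S^{m₁} ⊗ t^r`, where `A`, `B'` are the shifts
acting on the first, resp. second, tensor factor and `T' r` is `1 ⊗ 1 ⊗ t^r`. -/
def B1 (A B' : H →L[ℂ] H) (T' : ℤ → (H →L[ℂ] H)) (r : ℤ) (n m : ℕ × ℕ) : H →L[ℂ] H :=
  (adjoint A) ^ n.1 * A ^ m.1 * (adjoint B') ^ n.1 * B' ^ m.1 * T' r

/-- `B₂(r,n,m) = S*^{n₁} S^{m₁} ⊗ S*^{n₂} p S^{m₂} ⊗ t^r`. -/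
def B2 (A B' : H →L[ℂ] H) (T' : ℤ → (H →L[ℂ] H)) (r : ℤ) (n m : ℕ × ℕ) : H →L[ℂ] H :=
  (adjoint A) ^ n.1 * A ^ m.1 * (adjoint B') ^ n.2 * pj B' * B' ^ m.2 * T' r

/-- `B₃(r,n,m) = S*^{n₁} p S^{m₁} ⊗ S*^{n₂} S^{m₂} ⊗ t^r`. -/
def B3 (A B' : H →L[ℂ] H) (T' : ℤ → (H →L[ℂ] H)) (r : ℤ) (n m : ℕ × ℕ) : H →L[ℂ] H :=
  (adjoint A) ^ n.1 * pj A * A ^ m.1 * (adjoint B') ^ n.2 * B' ^ m.2 * T' r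

/-- `B₄(r,n,m) = S*^{n₁} p S^{m₁} ⊗ S*^{n₂} p S^{m₂} ⊗ t^r`. -/
def B4 (A B' : H →L[ℂ] H) (T' : ℤ → (H →L[ℂ] H)) (r : ℤ) (n m : ℕ × ℕ) : H →L[ℂ] H :=
  (adjoint A) ^ n.1 * pj A * A ^ m.1 * (adjoint B') ^ n.2 * pj B' * B' ^ m.2 * T' r

/-- `P_i(n) = B_i(0,n,n)`. -/
def P1 (A B' : H →L[ℂ] H) (T' : ℤ → (H →L[ℂ] H)) (n : ℕ × ℕ) : H →L[ℂ] H := B1 A B' T' 0 n n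
def P2 (A B' : H →L[ℂ] H) (T' : ℤ → (H →L[ℂ] H)) (n : ℕ × ℕ) : H →L[ℂ] H := B2 A B' T' 0 n n
def P3 (A B' : H →L[ℂ] H) (T' : ℤ → (H →L[ℂ] H)) (n : ℕ × ℕ) : H →L[ℂ] H := B3 A B' T' 0 n n
def P4 (A B' : H →L[ℂ] H) (T' : ℤ → (H →L[ℂ] H)) (n : ℕ × ℕ) : H →L[ℂ] H := B4 A B' T' 0 n n

/-- The hypotheses identifying `H` with `ℓ²(ℕ)⊗ℓ²(ℕ)⊗ℓ²(ℤ)` with orthonormal basis `e`,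
`A = S⊗1⊗1`, `B' = 1⊗S⊗1` (left shifts) and `T' r = 1⊗1⊗t^r` (bilateral shift powers). -/
def ShiftHyp (e : HilbertBasis (ℕ × ℕ × ℤ) ℂ H) (A B' : H →L[ℂ] H)
    (T' : ℤ → (H →L[ℂ] H)) : Prop :=
  (∀ (j : ℕ) (k : ℤ), A (e (0, j, k)) = 0) ∧
  (∀ (i j : ℕ) (k : ℤ), A (e (i + 1, j, k)) = e (i, j, k)) ∧
  (∀ (i : ℕ) (k : ℤ), B' (e (i, 0, k)) = 0) ∧
  (∀ (i j : ℕ) (k : ℤ), B' (e (i, j + 1, k)) = e (i, j, k)) ∧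
  (∀ (r : ℤ) (i j : ℕ) (k : ℤ), T' r (e (i, j, k)) = e (i, j, k + r))

/-- The inverse semigroup `T`: zero together with all admissible words `B_i(r,n,m)`. -/
def TSet (A B' : H →L[ℂ] H) (T' : ℤ → (H →L[ℂ] H)) : Set (H →L[ℂ] H) :=
  {0} ∪ {x | ∃ n m : ℕ × ℕ, x = B1 A B' T' ((m.1 : ℤ) - n.1) n m} ∪
  {x | ∃ n m : ℕ × ℕ, n.2 ≤ n.1 ∧ m.2 ≤ m.1 ∧ x = B2 A B' T' ((m.1 : ℤ) - n.1) n m} ∪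
  {x | ∃ n m : ℕ × ℕ, n.1 ≤ n.2 ∧ m.1 ≤ m.2 ∧ x = B3 A B' T' ((m.2 : ℤ) - n.2) n m} ∪
  {x | ∃ (r : ℤ) (n m : ℕ × ℕ), x = B4 A B' T' r n m}

/-- The projection semilattice `E` of `T`. -/
def ESet (A B' : H →L[ℂ] H) (T' : ℤ → (H →L[ℂ] H)) : Set (H →L[ℂ] H) :=
  {0} ∪ {x | ∃ n : ℕ, x = P1 A B' T' (n, n)} ∪
  {x | ∃ n : ℕ × ℕ, n.2 ≤ n.1 ∧ x = P2 A B' T' n} ∪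
  {x | ∃ n : ℕ × ℕ, n.1 ≤ n.2 ∧ x = P3 A B' T' n} ∪
  {x | ∃ n : ℕ × ℕ, x = P4 A B' T' n}

/-- A filter in a semilattice-with-zero `E` of projections (`e ≤ f ↔ e * f = e`). -/
def IsFilterIn {X : Type} [Ring X] (E A : Set X) : Prop :=
  A ⊆ E ∧ (0 : X) ∉ A ∧ (∀ a ∈ A, ∀ f ∈ E, a * f = a → f ∈ A) ∧ ∀ a ∈ A, ∀ b ∈ A, a * b ∈ A

/-- An ultrafilter: a maximal filter. -/
def IsUltrafilterIn {X : Type} [Ring X] (E A : Set X) : Prop :=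
  IsFilterIn E A ∧ ∀ B, IsFilterIn E B → A ⊆ B → B = A

/-- `A_{Λ(k)}` for finite `k ∈ ℕ²`. -/
def ALamFin (A B' : H →L[ℂ] H) (T' : ℤ → (H →L[ℂ] H)) (k : ℕ × ℕ) : Set (H →L[ℂ] H) :=
  {x | ∃ n : ℕ, n ≤ min k.1 k.2 ∧ x = P1 A B' T' (n, n)} ∪
  {x | ∃ n : ℕ × ℕ, n.2 = k.2 ∧ n.2 ≤ n.1 ∧ n.1 ≤ k.1 ∧ x = P2 A B' T' n} ∪
  {x | ∃ n : ℕ × ℕ, n.1 = k.1 ∧ n.1 ≤ n.2 ∧ n.2 ≤ k.2 ∧ x = P3 A B' T' n} ∪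
  {P4 A B' T' k}

/-- `A_{Λ(k)}` for `k ∈ (ℕ∪{∞})²`, with `∞` encoded as `none`. -/
def ALam (A B' : H →L[ℂ] H) (T' : ℤ → (H →L[ℂ] H)) :
    Option ℕ × Option ℕ → Set (H →L[ℂ] H) := fun k =>
  match k with
  | (some k1, some k2) => ALamFin A B' T' (k1, k2)
  | (some k1, none) =>
      {x | ∃ n : ℕ, n ≤ k1 ∧ x = P1 A B' T' (n, n)} ∪
      {x | ∃ l : ℕ, k1 ≤ l ∧ x = P3 A B' T' (k1, l)}
  | (none, some k2) =>
      {x | ∃ n : ℕ, n ≤ k2 ∧ x = P1 A B' T' (n, n)} ∪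
      {x | ∃ l : ℕ, k2 ≤ l ∧ x = P2 A B' T' (l, k2)}
  | (none, none) => {x | ∃ l : ℕ, x = P1 A B' T' (l, l)}

/-- The character (indicator function) of a subset. -/
def charOf {X : Type} (s : Set X) : X → Bool := fun x => decide (x ∈ s)

/-- Characters on `E`: nonzero multiplicative `{0,1}`-valued maps killing `0`. -/
def IsChar {X : Type} [Ring X] (E : Set X) (x : X → Bool) : Prop :=
  (∃ a ∈ E, x a = true) ∧ x 0 = false ∧ ∀ a ∈ E, ∀ b ∈ E, x (a * b) = (x a && x b)

/-- `n ≤ k` for `n : ℕ` and `k ∈ ℕ∪{∞}` (`∞ = none`). -/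
def leO (n : ℕ) (k : Option ℕ) : Prop := ∀ m : ℕ, k = some m → n ≤ m

/-- The domain set `D_s = {x ∈ Ê_tight : x(s s*) = 1}` (tight = ultrafilter characters). -/
def Dset (A B' : H →L[ℂ] H) (T' : ℤ → (H →L[ℂ] H)) (s : H →L[ℂ] H) :
    Set ((H →L[ℂ] H) → Bool) :=
  {x | (∃ Aset, IsUltrafilterIn (ESet A B' T') Aset ∧ x = charOf Aset) ∧
    x (s * adjoint s) = true}

open scoped InnerProductSpace in
lemma vec_ext (b : HilbertBasis (ℕ × ℕ × ℤ) ℂ H) {x y : H}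
    (h : ∀ v, ⟪b v, x⟫_ℂ = ⟪b v, y⟫_ℂ) : x = y := by
  apply b.repr.injective
  ext v
  rw [b.repr_apply_apply, b.repr_apply_apply]
  exact h v

lemma clm_ext (b : HilbertBasis (ℕ × ℕ × ℤ) ℂ H) {T U : H →L[ℂ] H}
    (h : ∀ v, T (b v) = U (b v)) : T = U := by
  have hd : Dense ((Submodule.span ℂ (Set.range b) : Submodule ℂ H) : Set H) := by
    rw [Submodule.dense_iff_topologicalClosure_eq_top, b.dense_span]
  have hTU : ⇑T = ⇑U := Continuous.ext_on hd T.continuous U.continuous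
    (LinearMap.eqOn_span' (fun x hx => by obtain ⟨v, rfl⟩ := hx; exact h v))
  ext x
  exact congrFun hTU x

variable {e : HilbertBasis (ℕ × ℕ × ℤ) ℂ H} {A B' : H →L[ℂ] H} {T' : ℤ → (H →L[ℂ] H)}

lemma e_ne_zero (v : ℕ × ℕ × ℤ) : e v ≠ 0 := by
  have := e.orthonormal.1 v
  intro h
  rw [h] at this
  simp at this

open scoped InnerProductSpace in
lemma adjA (hyp : ShiftHyp e A B' T') (i j : ℕ) (k : ℤ) :
    adjoint A (e (i, j, k)) = e (i + 1, j, k) := by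
  obtain ⟨hA0, hA1, _, _, _⟩ := hyp
  apply vec_ext e
  rintro ⟨i', j', k'⟩
  rw [adjoint_inner_right]
  have ob := orthonormal_iff_ite.mp e.orthonormal
  cases i' with
  | zero =>
    rw [hA0, ob]
    simp
  | succ i' =>
    rw [hA1, ob, ob]
    congr 1
    simp [Prod.ext_iff]

open scoped InnerProductSpace in
lemma adjB (hyp : ShiftHyp e A B' T') (i j : ℕ) (k : ℤ) :
    adjoint B' (e (i, j, k)) = e (i, j + 1, k) := by
  obtain ⟨_, _, hB0, hB1, _⟩ := hyp
  apply vec_ext e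
  rintro ⟨i', j', k'⟩
  rw [adjoint_inner_right]
  have ob := orthonormal_iff_ite.mp e.orthonormal
  cases j' with
  | zero =>
    rw [hB0, ob]
    simp
  | succ j' =>
    rw [hB1, ob, ob]
    congr 1
    simp [Prod.ext_iff]

lemma powA (hyp : ShiftHyp e A B' T') (m i j : ℕ) (k : ℤ) :
    (A ^ m) (e (i, j, k)) = if m ≤ i then e (i - m, j, k) else 0 := by
  induction m generalizing i with
  | zero => simp
  | succ m ih =>
    rw [pow_succ, ContinuousLinearMap.mul_apply]
    cases i with
    | zero =>
      rw [hyp.1]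
      simp
    | succ i =>
      rw [hyp.2.1, ih]
      by_cases h : m ≤ i
      · rw [if_pos h, if_pos (by omega)]
        congr 2
        omega
      · rw [if_neg h, if_neg (by omega)]

lemma powB (hyp : ShiftHyp e A B' T') (m i j : ℕ) (k : ℤ) :
    (B' ^ m) (e (i, j, k)) = if m ≤ j then e (i, j - m, k) else 0 := by
  induction m generalizing j with
  | zero => simp
  | succ m ih =>
    rw [pow_succ, ContinuousLinearMap.mul_apply]
    cases j with
    | zero =>
      rw [hyp.2.2.1]
      simp
    | succ j =>
      rw [hyp.2.2.2.1, ih]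
      by_cases h : m ≤ j
      · rw [if_pos h, if_pos (by omega)]
        have : j + 1 - (m + 1) = j - m := by omega
        rw [this]
      · rw [if_neg h, if_neg (by omega)]

lemma powAdjA (hyp : ShiftHyp e A B' T') (n i j : ℕ) (k : ℤ) :
    ((adjoint A) ^ n) (e (i, j, k)) = e (i + n, j, k) := by
  induction n generalizing i with
  | zero => simp
  | succ n ih =>
    rw [pow_succ, ContinuousLinearMap.mul_apply, adjA hyp, ih]
    congr 2
    omega

lemma powAdjB (hyp : ShiftHyp e A B' T') (n i j : ℕ) (k : ℤ) :
    ((adjoint B') ^ n) (e (i, j, k)) = e (i, j + n, k) := by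
  induction n generalizing j with
  | zero => simp
  | succ n ih =>
    rw [pow_succ, ContinuousLinearMap.mul_apply, adjB hyp, ih]
    have : j + 1 + n = j + (n + 1) := by omega
    rw [this]

lemma pjA (hyp : ShiftHyp e A B' T') (i j : ℕ) (k : ℤ) :
    pj A (e (i, j, k)) = if i = 0 then e (i, j, k) else 0 := by
  rw [pj, sub_apply, ContinuousLinearMap.one_apply, ContinuousLinearMap.mul_apply]
  cases i with
  | zero => rw [hyp.1, map_zero]; simp
  | succ i => rw [hyp.2.1, adjA hyp]; simp

lemma pjB (hyp : ShiftHyp e A B' T') (i j : ℕ) (k : ℤ) :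
    pj B' (e (i, j, k)) = if j = 0 then e (i, j, k) else 0 := by
  rw [pj, sub_apply, ContinuousLinearMap.one_apply, ContinuousLinearMap.mul_apply]
  cases j with
  | zero => rw [hyp.2.2.1, map_zero]; simp
  | succ j => rw [hyp.2.2.2.1, adjB hyp]; simp

def Qs1 (n : ℕ) : Set (ℕ × ℕ) := {v | n ≤ v.1 ∧ n ≤ v.2}
def Qs2 (n : ℕ × ℕ) : Set (ℕ × ℕ) := {v | n.1 ≤ v.1 ∧ v.2 = n.2}
def Qs3 (n : ℕ × ℕ) : Set (ℕ × ℕ) := {v | v.1 = n.1 ∧ n.2 ≤ v.2}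
def Qs4 (n : ℕ × ℕ) : Set (ℕ × ℕ) := {v | v = n}

def DiagOn (e : HilbertBasis (ℕ × ℕ × ℤ) ℂ H) (P : H →L[ℂ] H) (S : Set (ℕ × ℕ)) : Prop :=
  ∀ (i j : ℕ) (k : ℤ), P (e (i, j, k)) = if (i, j) ∈ S then e (i, j, k) else 0

lemma diag_zero : DiagOn e (0 : H →L[ℂ] H) ∅ := by
  intro i j k
  simp

lemma diag_mul {P Q : H →L[ℂ] H} {S S' : Set (ℕ × ℕ)}
    (hP : DiagOn e P S) (hQ : DiagOn e Q S') : DiagOn e (P * Q) (S ∩ S') := by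
  intro i j k
  rw [ContinuousLinearMap.mul_apply, hQ]
  by_cases h2 : (i, j) ∈ S'
  · rw [if_pos h2, hP]
    by_cases h1 : (i, j) ∈ S
    · rw [if_pos h1, if_pos (Set.mem_inter h1 h2)]
    · rw [if_neg h1, if_neg (fun hc : (i,j) ∈ S ∩ S' => h1 hc.1)]
  · rw [if_neg h2, map_zero, if_neg (fun hc : (i,j) ∈ S ∩ S' => h2 hc.2)]

lemma diag_set_unique {P : H →L[ℂ] H} {S S' : Set (ℕ × ℕ)}
    (hP : DiagOn e P S) (hP' : DiagOn e P S') : S = S' := by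
  ext v
  obtain ⟨i, j⟩ := v
  have h1 := hP i j 0
  have h2 := hP' i j 0
  constructor
  · intro h
    by_contra h'
    rw [if_pos h] at h1
    rw [if_neg h'] at h2
    exact e_ne_zero (e := e) (i, j, 0) (h1.symm.trans h2)
  · intro h
    by_contra h'
    rw [if_neg h'] at h1
    rw [if_pos h] at h2
    exact e_ne_zero (e := e) (i, j, 0) (h2.symm.trans h1)

lemma diag_op_unique {P Q : H →L[ℂ] H} {S : Set (ℕ × ℕ)}
    (hP : DiagOn e P S) (hQ : DiagOn e Q S) : P = Q :=
  clm_ext e fun v => by obtain ⟨i, j, k⟩ := v; rw [hP, hQ]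

lemma eq_of_diag_sets {P Q : H →L[ℂ] H} {SP SQ : Set (ℕ × ℕ)}
    (dP : DiagOn e P SP) (dQ : DiagOn e Q SQ) (h : SP = SQ) : P = Q :=
  diag_op_unique (h ▸ dP) dQ

lemma diag_eq_zero {P : H →L[ℂ] H} {S : Set (ℕ × ℕ)}
    (dP : DiagOn e P S) (h : S = ∅) : P = 0 :=
  eq_of_diag_sets dP diag_zero h

lemma diag_P1 (hyp : ShiftHyp e A B' T') (n : ℕ) :
    DiagOn e (P1 A B' T' (n, n)) (Qs1 n) := by
  intro i j k
  rw [P1, B1, ContinuousLinearMap.mul_apply, ContinuousLinearMap.mul_apply, ContinuousLinearMap.mul_apply, ContinuousLinearMap.mul_apply, hyp.2.2.2.2, add_zero, powB hyp]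
  by_cases hj : n ≤ j
  · rw [if_pos hj, powAdjB hyp, (show j - n + n = j by omega), powA hyp]
    by_cases hi : n ≤ i
    · rw [if_pos hi, powAdjA hyp, (show i - n + n = i by omega),
        if_pos (show (i, j) ∈ Qs1 n from ⟨hi, hj⟩)]
    · have hnm : (i, j) ∉ _ := (fun hc : (i,j) ∈ Qs1 n => hi hc.1)
      rw [if_neg hi, if_neg hnm]
      simp
  · have hnm : (i, j) ∉ _ := (fun hc : (i,j) ∈ Qs1 n => hj hc.2)
    rw [if_neg hj, if_neg hnm]
    simp

lemma diag_P2 (hyp : ShiftHyp e A B' T') (n : ℕ × ℕ) :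
    DiagOn e (P2 A B' T' n) (Qs2 n) := by
  intro i j k
  rw [P2, B2, ContinuousLinearMap.mul_apply, ContinuousLinearMap.mul_apply, ContinuousLinearMap.mul_apply, ContinuousLinearMap.mul_apply, ContinuousLinearMap.mul_apply, hyp.2.2.2.2, add_zero,
    powB hyp]
  by_cases hj : n.2 ≤ j
  · rw [if_pos hj, pjB hyp]
    by_cases hj2 : j - n.2 = 0
    · have hjeq : j = n.2 := by omega
      rw [if_pos hj2, powAdjB hyp, (show j - n.2 + n.2 = j by omega), powA hyp]
      by_cases hi : n.1 ≤ i
      · rw [if_pos hi, powAdjA hyp, (show i - n.1 + n.1 = i by omega),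
          if_pos (show (i, j) ∈ Qs2 n from ⟨hi, hjeq⟩)]
      · have hnm : (i, j) ∉ _ := (fun hc : (i,j) ∈ Qs2 n => hi hc.1)
        rw [if_neg hi, if_neg hnm]
        simp
    · have hnm : (i, j) ∉ _ := (fun hc : (i,j) ∈ Qs2 n => hj2 (by have h2 : j = n.2 := hc.2; omega))
      rw [if_neg hj2, if_neg hnm]
      simp
  · have hnm : (i, j) ∉ _ := (fun hc : (i,j) ∈ Qs2 n => hj (le_of_eq hc.2.symm))
    rw [if_neg hj, if_neg hnm]
    simp

lemma diag_P3 (hyp : ShiftHyp e A B' T') (n : ℕ × ℕ) :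
    DiagOn e (P3 A B' T' n) (Qs3 n) := by
  intro i j k
  rw [P3, B3, ContinuousLinearMap.mul_apply, ContinuousLinearMap.mul_apply, ContinuousLinearMap.mul_apply, ContinuousLinearMap.mul_apply, ContinuousLinearMap.mul_apply, hyp.2.2.2.2, add_zero,
    powB hyp]
  by_cases hj : n.2 ≤ j
  · rw [if_pos hj, powAdjB hyp, (show j - n.2 + n.2 = j by omega), powA hyp]
    by_cases hi : n.1 ≤ i
    · rw [if_pos hi, pjA hyp]
      by_cases hi2 : i - n.1 = 0
      · have hieq : i = n.1 := by omega
        rw [if_pos hi2, powAdjA hyp, (show i - n.1 + n.1 = i by omega),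
          if_pos (show (i, j) ∈ Qs3 n from ⟨hieq, hj⟩)]
      · have hnm : (i, j) ∉ _ := (fun hc : (i,j) ∈ Qs3 n => hi2 (by have h2 : i = n.1 := hc.1; omega))
        rw [if_neg hi2, if_neg hnm]
        simp
    · have hnm : (i, j) ∉ _ := (fun hc : (i,j) ∈ Qs3 n => hi (le_of_eq hc.1.symm))
      rw [if_neg hi, if_neg hnm]
      simp
  · have hnm : (i, j) ∉ _ := (fun hc : (i,j) ∈ Qs3 n => hj hc.2)
    rw [if_neg hj, if_neg hnm]
    simp

lemma diag_P4 (hyp : ShiftHyp e A B' T') (n : ℕ × ℕ) :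
    DiagOn e (P4 A B' T' n) (Qs4 n) := by
  intro i j k
  rw [P4, B4, ContinuousLinearMap.mul_apply, ContinuousLinearMap.mul_apply, ContinuousLinearMap.mul_apply, ContinuousLinearMap.mul_apply, ContinuousLinearMap.mul_apply, ContinuousLinearMap.mul_apply, hyp.2.2.2.2,
    add_zero, powB hyp]
  by_cases hj : n.2 ≤ j
  · rw [if_pos hj, pjB hyp]
    by_cases hj2 : j - n.2 = 0
    · have hjeq : j = n.2 := by omega
      rw [if_pos hj2, powAdjB hyp, (show j - n.2 + n.2 = j by omega), powA hyp]
      by_cases hi : n.1 ≤ i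
      · rw [if_pos hi, pjA hyp]
        by_cases hi2 : i - n.1 = 0
        · have hieq : i = n.1 := by omega
          rw [if_pos hi2, powAdjA hyp, (show i - n.1 + n.1 = i by omega),
            if_pos (show (i, j) ∈ Qs4 n from Prod.ext hieq hjeq)]
        · have hnm : (i, j) ∉ _ := (fun hc : (i,j) ∈ Qs4 n => hi2 (by have := Prod.ext_iff.mp hc; omega))
          rw [if_neg hi2, if_neg hnm]
          simp
      · have hnm : (i, j) ∉ _ := (fun hc : (i,j) ∈ Qs4 n => hi (by have := Prod.ext_iff.mp hc; omega))
        rw [if_neg hi, if_neg hnm]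
        simp
    · have hnm : (i, j) ∉ _ := (fun hc : (i,j) ∈ Qs4 n => hj2 (by have := Prod.ext_iff.mp hc; omega))
      rw [if_neg hj2, if_neg hnm]
      simp
  · have hnm : (i, j) ∉ _ := (fun hc : (i,j) ∈ Qs4 n => hj (by have := Prod.ext_iff.mp hc; omega))
    rw [if_neg hj, if_neg hnm]
    simp

lemma diag_ne_zero {P : H →L[ℂ] H} {S : Set (ℕ × ℕ)}
    (dP : DiagOn e P S) (hne : S.Nonempty) : P ≠ 0 := by
  obtain ⟨⟨i, j⟩, hv⟩ := hne
  intro h0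
  have := dP i j 0
  rw [h0, if_pos hv, zero_apply] at this
  exact e_ne_zero (e := e) (i, j, 0) this.symm


lemma mem_ESet_iff {p : H →L[ℂ] H} :
    p ∈ ESet A B' T' ↔ ((((p = 0 ∨ ∃ n : ℕ, p = P1 A B' T' (n, n)) ∨
      (∃ n : ℕ × ℕ, n.2 ≤ n.1 ∧ p = P2 A B' T' n)) ∨
      (∃ n : ℕ × ℕ, n.1 ≤ n.2 ∧ p = P3 A B' T' n)) ∨ (∃ n : ℕ × ℕ, p = P4 A B' T' n)) :=
  Iff.rfl

lemma memE_zero : (0 : H →L[ℂ] H) ∈ ESet A B' T' :=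
  mem_ESet_iff.mpr (Or.inl (Or.inl (Or.inl (Or.inl rfl))))

lemma memE_P1 (n : ℕ) : P1 A B' T' (n, n) ∈ ESet A B' T' :=
  mem_ESet_iff.mpr (Or.inl (Or.inl (Or.inl (Or.inr ⟨n, rfl⟩))))

lemma memE_P2 {n : ℕ × ℕ} (h : n.2 ≤ n.1) : P2 A B' T' n ∈ ESet A B' T' :=
  mem_ESet_iff.mpr (Or.inl (Or.inl (Or.inr ⟨n, h, rfl⟩)))

lemma memE_P3 {n : ℕ × ℕ} (h : n.1 ≤ n.2) : P3 A B' T' n ∈ ESet A B' T' :=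
  mem_ESet_iff.mpr (Or.inl (Or.inr ⟨n, h, rfl⟩))

lemma memE_P4 (n : ℕ × ℕ) : P4 A B' T' n ∈ ESet A B' T' :=
  mem_ESet_iff.mpr (Or.inr ⟨n, rfl⟩)

lemma ESet_diag (hyp : ShiftHyp e A B' T') {p : H →L[ℂ] H} (hp : p ∈ ESet A B' T') :
    ∃ S, DiagOn e p S := by
  rcases mem_ESet_iff.mp hp with ((((rfl | ⟨n, rfl⟩) | ⟨n, _, rfl⟩) | ⟨n, _, rfl⟩) | ⟨n, rfl⟩)
  · exact ⟨∅, diag_zero⟩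
  · exact ⟨Qs1 n, diag_P1 hyp n⟩
  · exact ⟨Qs2 n, diag_P2 hyp n⟩
  · exact ⟨Qs3 n, diag_P3 hyp n⟩
  · exact ⟨Qs4 n, diag_P4 hyp n⟩

lemma repr_mul {a b c : H →L[ℂ] H} {Sa Sb Sc : Set (ℕ × ℕ)}
    (da : DiagOn e a Sa) (db : DiagOn e b Sb) (dc : DiagOn e c Sc)
    (h : Sa ∩ Sb = Sc) (hc : c ∈ ESet A B' T') : a * b ∈ ESet A B' T' := by
  rw [eq_of_diag_sets (diag_mul da db) dc h]
  exact hc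

lemma mul_mem_ESet (hyp : ShiftHyp e A B' T') {a b : H →L[ℂ] H}
    (ha : a ∈ ESet A B' T') (hb : b ∈ ESet A B' T') : a * b ∈ ESet A B' T' := by
  have z := diag_zero (e := e) (H := H)
  rcases mem_ESet_iff.mp ha with ((((rfl | ⟨n, rfl⟩) | ⟨n, hn, rfl⟩) | ⟨n, hn, rfl⟩) | ⟨n, rfl⟩)
  · rw [zero_mul]; exact memE_zero
  all_goals
    rcases mem_ESet_iff.mp hb with ((((rfl | ⟨m, rfl⟩) | ⟨m, hm, rfl⟩) | ⟨m, hm, rfl⟩) | ⟨m, rfl⟩)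
  -- P1 * _
  · rw [mul_zero]; exact memE_zero
  · exact repr_mul (diag_P1 hyp n) (diag_P1 hyp m) (diag_P1 hyp (max n m))
      (by ext ⟨i, j⟩; simp [Qs1]; omega) (memE_P1 _)
  · by_cases hc : n ≤ m.2
    · exact repr_mul (diag_P1 hyp n) (diag_P2 hyp m) (diag_P2 hyp (max n m.1, m.2))
        (by ext ⟨i, j⟩; simp [Qs1, Qs2]; omega) (memE_P2 (by simp; omega))
    · exact repr_mul (diag_P1 hyp n) (diag_P2 hyp m) z
        (by ext ⟨i, j⟩; simp [Qs1, Qs2]; omega) memE_zero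
  · by_cases hc : n ≤ m.1
    · exact repr_mul (diag_P1 hyp n) (diag_P3 hyp m) (diag_P3 hyp (m.1, max n m.2))
        (by ext ⟨i, j⟩; simp [Qs1, Qs3]; omega) (memE_P3 (by simp; omega))
    · exact repr_mul (diag_P1 hyp n) (diag_P3 hyp m) z
        (by ext ⟨i, j⟩; simp [Qs1, Qs3]; omega) memE_zero
  · by_cases hc : n ≤ m.1 ∧ n ≤ m.2
    · exact repr_mul (diag_P1 hyp n) (diag_P4 hyp m) (diag_P4 hyp m)
        (by ext ⟨i, j⟩; simp [Qs1, Qs4, Prod.ext_iff]; omega) (memE_P4 _)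
    · exact repr_mul (diag_P1 hyp n) (diag_P4 hyp m) z
        (by ext ⟨i, j⟩; simp [Qs1, Qs4, Prod.ext_iff]; omega) memE_zero
  -- P2 * _
  · rw [mul_zero]; exact memE_zero
  · by_cases hc : m ≤ n.2
    · exact repr_mul (diag_P2 hyp n) (diag_P1 hyp m) (diag_P2 hyp (max m n.1, n.2))
        (by ext ⟨i, j⟩; simp [Qs1, Qs2]; omega) (memE_P2 (by simp; omega))
    · exact repr_mul (diag_P2 hyp n) (diag_P1 hyp m) z
        (by ext ⟨i, j⟩; simp [Qs1, Qs2]; omega) memE_zero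
  · by_cases hc : n.2 = m.2
    · exact repr_mul (diag_P2 hyp n) (diag_P2 hyp m) (diag_P2 hyp (max n.1 m.1, n.2))
        (by ext ⟨i, j⟩; simp [Qs2]; omega) (memE_P2 (by simp; omega))
    · exact repr_mul (diag_P2 hyp n) (diag_P2 hyp m) z
        (by ext ⟨i, j⟩; simp [Qs2]; omega) memE_zero
  · by_cases hc : n.1 ≤ m.1 ∧ m.2 ≤ n.2
    · exact repr_mul (diag_P2 hyp n) (diag_P3 hyp m) (diag_P4 hyp (m.1, n.2))
        (by ext ⟨i, j⟩; simp [Qs2, Qs3, Qs4, Prod.ext_iff]; omega) (memE_P4 _)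
    · exact repr_mul (diag_P2 hyp n) (diag_P3 hyp m) z
        (by ext ⟨i, j⟩; simp [Qs2, Qs3, Qs4]; omega) memE_zero
  · by_cases hc : n.1 ≤ m.1 ∧ m.2 = n.2
    · exact repr_mul (diag_P2 hyp n) (diag_P4 hyp m) (diag_P4 hyp m)
        (by ext ⟨i, j⟩; simp [Qs2, Qs4, Prod.ext_iff]; omega) (memE_P4 _)
    · exact repr_mul (diag_P2 hyp n) (diag_P4 hyp m) z
        (by ext ⟨i, j⟩; simp [Qs2, Qs4, Prod.ext_iff]; omega) memE_zero
  -- P3 * _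
  · rw [mul_zero]; exact memE_zero
  · by_cases hc : m ≤ n.1
    · exact repr_mul (diag_P3 hyp n) (diag_P1 hyp m) (diag_P3 hyp (n.1, max m n.2))
        (by ext ⟨i, j⟩; simp [Qs1, Qs3]; omega) (memE_P3 (by simp; omega))
    · exact repr_mul (diag_P3 hyp n) (diag_P1 hyp m) z
        (by ext ⟨i, j⟩; simp [Qs1, Qs3]; omega) memE_zero
  · by_cases hc : m.1 ≤ n.1 ∧ n.2 ≤ m.2
    · exact repr_mul (diag_P3 hyp n) (diag_P2 hyp m) (diag_P4 hyp (n.1, m.2))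
        (by ext ⟨i, j⟩; simp [Qs2, Qs3, Qs4, Prod.ext_iff]; omega) (memE_P4 _)
    · exact repr_mul (diag_P3 hyp n) (diag_P2 hyp m) z
        (by ext ⟨i, j⟩; simp [Qs2, Qs3, Qs4]; omega) memE_zero
  · by_cases hc : n.1 = m.1
    · exact repr_mul (diag_P3 hyp n) (diag_P3 hyp m) (diag_P3 hyp (n.1, max n.2 m.2))
        (by ext ⟨i, j⟩; simp [Qs3]; omega) (memE_P3 (by simp; omega))
    · exact repr_mul (diag_P3 hyp n) (diag_P3 hyp m) z
        (by ext ⟨i, j⟩; simp [Qs3]; omega) memE_zero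
  · by_cases hc : m.1 = n.1 ∧ n.2 ≤ m.2
    · exact repr_mul (diag_P3 hyp n) (diag_P4 hyp m) (diag_P4 hyp m)
        (by ext ⟨i, j⟩; simp [Qs3, Qs4, Prod.ext_iff]; omega) (memE_P4 _)
    · exact repr_mul (diag_P3 hyp n) (diag_P4 hyp m) z
        (by ext ⟨i, j⟩; simp [Qs3, Qs4, Prod.ext_iff]; omega) memE_zero
  -- P4 * _
  · rw [mul_zero]; exact memE_zero
  · by_cases hc : m ≤ n.1 ∧ m ≤ n.2
    · exact repr_mul (diag_P4 hyp n) (diag_P1 hyp m) (diag_P4 hyp n)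
        (by ext ⟨i, j⟩; simp [Qs1, Qs4, Prod.ext_iff]; omega) (memE_P4 _)
    · exact repr_mul (diag_P4 hyp n) (diag_P1 hyp m) z
        (by ext ⟨i, j⟩; simp [Qs1, Qs4, Prod.ext_iff]; omega) memE_zero
  · by_cases hc : m.1 ≤ n.1 ∧ n.2 = m.2
    · exact repr_mul (diag_P4 hyp n) (diag_P2 hyp m) (diag_P4 hyp n)
        (by ext ⟨i, j⟩; simp [Qs2, Qs4, Prod.ext_iff]; omega) (memE_P4 _)
    · exact repr_mul (diag_P4 hyp n) (diag_P2 hyp m) z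
        (by ext ⟨i, j⟩; simp [Qs2, Qs4, Prod.ext_iff]; omega) memE_zero
  · by_cases hc : n.1 = m.1 ∧ m.2 ≤ n.2
    · exact repr_mul (diag_P4 hyp n) (diag_P3 hyp m) (diag_P4 hyp n)
        (by ext ⟨i, j⟩; simp [Qs3, Qs4, Prod.ext_iff]; omega) (memE_P4 _)
    · exact repr_mul (diag_P4 hyp n) (diag_P3 hyp m) z
        (by ext ⟨i, j⟩; simp [Qs3, Qs4, Prod.ext_iff]; omega) memE_zero
  · by_cases hc : n.1 = m.1 ∧ n.2 = m.2
    · exact repr_mul (diag_P4 hyp n) (diag_P4 hyp m) (diag_P4 hyp n)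
        (by ext ⟨i, j⟩; simp [Qs4, Prod.ext_iff]; omega) (memE_P4 _)
    · exact repr_mul (diag_P4 hyp n) (diag_P4 hyp m) z
        (by ext ⟨i, j⟩; simp [Qs4, Prod.ext_iff]; omega) memE_zero


def KSet : Option ℕ × Option ℕ → ℕ → Set (ℕ × ℕ)
  | (some k1, some k2), _ => {(k1, k2)}
  | (some k1, none), m => {v | v.1 = k1 ∧ m ≤ v.2}
  | (none, some k2), m => {v | m ≤ v.1 ∧ v.2 = k2}
  | (none, none), m => {v | m ≤ v.1 ∧ m ≤ v.2}

lemma KSet_antitone {k : Option ℕ × Option ℕ} {m m' : ℕ} (h : m ≤ m') :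
    KSet k m' ⊆ KSet k m := by
  obtain ⟨o1, o2⟩ := k
  rcases o1 with _ | k1 <;> rcases o2 with _ | k2 <;>
    (intro ⟨i, j⟩ hv; simp [KSet] at hv ⊢) <;> omega

lemma KSet_nonempty (k : Option ℕ × Option ℕ) (m : ℕ) : (KSet k m).Nonempty := by
  obtain ⟨o1, o2⟩ := k
  rcases o1 with _ | k1 <;> rcases o2 with _ | k2
  · exact ⟨(m, m), by simp [KSet]⟩
  · exact ⟨(m, k2), by simp [KSet]⟩
  · exact ⟨(k1, m), by simp [KSet]⟩
  · exact ⟨(k1, k2), by simp [KSet]⟩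

lemma mem_ALam_fin_iff (hyp : ShiftHyp e A B' T') {p : H →L[ℂ] H} {k1 k2 : ℕ} :
    p ∈ ALam A B' T' (some k1, some k2) ↔
      p ∈ ESet A B' T' ∧ ∃ S, DiagOn e p S ∧ (k1, k2) ∈ S := by
  constructor
  · intro hp
    rcases hp with ((⟨n, hn, rfl⟩ | ⟨n, h1, h2, h3, rfl⟩) | ⟨n, h1, h2, h3, rfl⟩) | rfl
    · exact ⟨memE_P1 n, Qs1 n, diag_P1 hyp n, by constructor <;> simp <;> omega⟩
    · exact ⟨memE_P2 h2, Qs2 n, diag_P2 hyp n, h3, h1.symm⟩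
    · exact ⟨memE_P3 h2, Qs3 n, diag_P3 hyp n, h1.symm, h3⟩
    · exact ⟨memE_P4 _, Qs4 (k1, k2), diag_P4 hyp _, rfl⟩
  · rintro ⟨hE, S, dS, hp⟩
    rcases mem_ESet_iff.mp hE with ((((rfl | ⟨n, rfl⟩) | ⟨n, hn, rfl⟩) | ⟨n, hn, rfl⟩) | ⟨n, rfl⟩)
    · rw [diag_set_unique dS (diag_zero (e := e))] at hp
      exact absurd hp (Set.notMem_empty _)
    · rw [diag_set_unique dS (diag_P1 hyp n)] at hp
      exact Or.inl (Or.inl (Or.inl ⟨n, le_min hp.1 hp.2, rfl⟩))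
    · rw [diag_set_unique dS (diag_P2 hyp n)] at hp
      exact Or.inl (Or.inl (Or.inr ⟨n, hp.2.symm, hn, hp.1, rfl⟩))
    · rw [diag_set_unique dS (diag_P3 hyp n)] at hp
      exact Or.inl (Or.inr ⟨n, hp.1.symm, hn, hp.2, rfl⟩)
    · rw [diag_set_unique dS (diag_P4 hyp n)] at hp
      exact Or.inr (by rw [show n = (k1, k2) from hp.symm]; rfl)

lemma mem_ALam_inf1_iff (hyp : ShiftHyp e A B' T') {p : H →L[ℂ] H} {k1 : ℕ} :
    p ∈ ALam A B' T' (some k1, none) ↔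
      p ∈ ESet A B' T' ∧ ∃ S, DiagOn e p S ∧ ∃ m, KSet (some k1, none) m ⊆ S := by
  constructor
  · intro hp
    rcases hp with ⟨n, hn, rfl⟩ | ⟨l, hl, rfl⟩
    · refine ⟨memE_P1 n, Qs1 n, diag_P1 hyp n, n, ?_⟩
      rintro ⟨i, j⟩ hv
      simp [KSet] at hv
      exact ⟨by omega, hv.2⟩
    · refine ⟨memE_P3 hl, Qs3 (k1, l), diag_P3 hyp _, l, ?_⟩
      rintro ⟨i, j⟩ hv
      simp [KSet] at hv
      exact ⟨hv.1, hv.2⟩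
  · rintro ⟨hE, S, dS, m, hsub⟩
    rcases mem_ESet_iff.mp hE with ((((rfl | ⟨n, rfl⟩) | ⟨n, hn, rfl⟩) | ⟨n, hn, rfl⟩) | ⟨n, rfl⟩)
    · have := hsub (show (k1, m) ∈ KSet (some k1, none) m from ⟨rfl, le_refl m⟩)
      rw [diag_set_unique dS (diag_zero (e := e))] at this
      exact absurd this (Set.notMem_empty _)
    · have := hsub (show (k1, max m n) ∈ KSet (some k1, none) m from ⟨rfl, le_max_left _ _⟩)
      rw [diag_set_unique dS (diag_P1 hyp n)] at this
      exact Or.inl ⟨n, this.1, rfl⟩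
    · have := hsub (show (k1, max m (n.2 + 1)) ∈ KSet (some k1, none) m from
        ⟨rfl, le_max_left _ _⟩)
      rw [diag_set_unique dS (diag_P2 hyp n)] at this
      have h2 := this.2
      simp at h2
      omega
    · have := hsub (show (k1, max m n.2) ∈ KSet (some k1, none) m from ⟨rfl, le_max_left _ _⟩)
      rw [diag_set_unique dS (diag_P3 hyp n)] at this
      have h1 : k1 = n.1 := this.1
      refine Or.inr ⟨n.2, by omega, ?_⟩
      rw [show (k1, n.2) = n from Prod.ext h1 rfl]
    · have h1 := hsub (show (k1, m) ∈ KSet (some k1, none) m from ⟨rfl, le_refl m⟩)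
      have h2 := hsub (show (k1, m + 1) ∈ KSet (some k1, none) m from ⟨rfl, by omega⟩)
      rw [diag_set_unique dS (diag_P4 hyp n)] at h1 h2
      have e1 := Prod.ext_iff.mp h1
      have e2 := Prod.ext_iff.mp h2
      omega

lemma mem_ALam_inf2_iff (hyp : ShiftHyp e A B' T') {p : H →L[ℂ] H} {k2 : ℕ} :
    p ∈ ALam A B' T' (none, some k2) ↔
      p ∈ ESet A B' T' ∧ ∃ S, DiagOn e p S ∧ ∃ m, KSet (none, some k2) m ⊆ S := by
  constructor
  · intro hp
    rcases hp with ⟨n, hn, rfl⟩ | ⟨l, hl, rfl⟩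
    · refine ⟨memE_P1 n, Qs1 n, diag_P1 hyp n, n, ?_⟩
      rintro ⟨i, j⟩ hv
      simp [KSet] at hv
      exact ⟨hv.1, by omega⟩
    · refine ⟨memE_P2 hl, Qs2 (l, k2), diag_P2 hyp _, l, ?_⟩
      rintro ⟨i, j⟩ hv
      simp [KSet] at hv
      exact ⟨hv.1, hv.2⟩
  · rintro ⟨hE, S, dS, m, hsub⟩
    rcases mem_ESet_iff.mp hE with ((((rfl | ⟨n, rfl⟩) | ⟨n, hn, rfl⟩) | ⟨n, hn, rfl⟩) | ⟨n, rfl⟩)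
    · have := hsub (show (m, k2) ∈ KSet (none, some k2) m from ⟨le_refl m, rfl⟩)
      rw [diag_set_unique dS (diag_zero (e := e))] at this
      exact absurd this (Set.notMem_empty _)
    · have := hsub (show (max m n, k2) ∈ KSet (none, some k2) m from ⟨le_max_left _ _, rfl⟩)
      rw [diag_set_unique dS (diag_P1 hyp n)] at this
      exact Or.inl ⟨n, this.2, rfl⟩
    · have := hsub (show (max m n.1, k2) ∈ KSet (none, some k2) m from ⟨le_max_left _ _, rfl⟩)
      rw [diag_set_unique dS (diag_P2 hyp n)] at this
      have h2 : k2 = n.2 := this.2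
      refine Or.inr ⟨n.1, by omega, ?_⟩
      rw [show (n.1, k2) = n from Prod.ext rfl h2]
    · have := hsub (show (max m (n.1 + 1), k2) ∈ KSet (none, some k2) m from
        ⟨le_max_left _ _, rfl⟩)
      rw [diag_set_unique dS (diag_P3 hyp n)] at this
      have h1 := this.1
      simp at h1
      omega
    · have h1 := hsub (show (m, k2) ∈ KSet (none, some k2) m from ⟨le_refl m, rfl⟩)
      have h2 := hsub (show (m + 1, k2) ∈ KSet (none, some k2) m from ⟨by omega, rfl⟩)
      rw [diag_set_unique dS (diag_P4 hyp n)] at h1 h2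
      have e1 := Prod.ext_iff.mp h1
      have e2 := Prod.ext_iff.mp h2
      omega

lemma mem_ALam_infinf_iff (hyp : ShiftHyp e A B' T') {p : H →L[ℂ] H} :
    p ∈ ALam A B' T' (none, none) ↔
      p ∈ ESet A B' T' ∧ ∃ S, DiagOn e p S ∧ ∃ m, KSet (none, none) m ⊆ S := by
  constructor
  · rintro ⟨l, rfl⟩
    refine ⟨memE_P1 l, Qs1 l, diag_P1 hyp l, l, ?_⟩
    rintro ⟨i, j⟩ hv
    exact hv
  · rintro ⟨hE, S, dS, m, hsub⟩
    rcases mem_ESet_iff.mp hE with ((((rfl | ⟨n, rfl⟩) | ⟨n, hn, rfl⟩) | ⟨n, hn, rfl⟩) | ⟨n, rfl⟩)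
    · have := hsub (show (m, m) ∈ KSet (none, none) m from ⟨le_refl m, le_refl m⟩)
      rw [diag_set_unique dS (diag_zero (e := e))] at this
      exact absurd this (Set.notMem_empty _)
    · exact ⟨n, rfl⟩
    · have := hsub (show (max m n.1, max m (n.2 + 1)) ∈ KSet (none, none) m from
        ⟨le_max_left _ _, le_max_left _ _⟩)
      rw [diag_set_unique dS (diag_P2 hyp n)] at this
      have h2 := this.2
      simp at h2
      omega
    · have := hsub (show (max m (n.1 + 1), max m n.2) ∈ KSet (none, none) m from
        ⟨le_max_left _ _, le_max_left _ _⟩)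
      rw [diag_set_unique dS (diag_P3 hyp n)] at this
      have h1 := this.1
      simp at h1
      omega
    · have h1 := hsub (show (m, m) ∈ KSet (none, none) m from ⟨le_refl m, le_refl m⟩)
      have h2 := hsub (show (m + 1, m) ∈ KSet (none, none) m from ⟨by omega, le_refl m⟩)
      rw [diag_set_unique dS (diag_P4 hyp n)] at h1 h2
      have e1 := Prod.ext_iff.mp h1
      have e2 := Prod.ext_iff.mp h2
      omega

lemma mem_ALam_iff (hyp : ShiftHyp e A B' T') {p : H →L[ℂ] H} {k : Option ℕ × Option ℕ} :
    p ∈ ALam A B' T' k ↔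
      p ∈ ESet A B' T' ∧ ∃ S, DiagOn e p S ∧ ∃ m, KSet k m ⊆ S := by
  obtain ⟨o1, o2⟩ := k
  rcases o1 with _ | k1 <;> rcases o2 with _ | k2
  · exact mem_ALam_infinf_iff hyp
  · exact mem_ALam_inf2_iff hyp
  · exact mem_ALam_inf1_iff hyp
  · rw [mem_ALam_fin_iff hyp]
    constructor
    · rintro ⟨hE, S, dS, hp⟩
      exact ⟨hE, S, dS, 0, by rintro v rfl; exact hp⟩
    · rintro ⟨hE, S, dS, m, hsub⟩
      exact ⟨hE, S, dS, hsub rfl⟩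


lemma filter_absurd {B : Set (H →L[ℂ] H)} (hB : IsFilterIn (ESet A B' T') B)
    {f a : H →L[ℂ] H} (hf : f ∈ B) (ha : a ∈ B) {Sf Sa : Set (ℕ × ℕ)}
    (df : DiagOn e f Sf) (da : DiagOn e a Sa) (hdisj : Sa ∩ Sf = ∅) : False := by
  have hmem : a * f ∈ B := hB.2.2.2 a ha f hf
  rw [diag_eq_zero (diag_mul da df) hdisj] at hmem
  exact hB.2.1 hmem

lemma ALam_filter (hyp : ShiftHyp e A B' T') (k : Option ℕ × Option ℕ) :
    IsFilterIn (ESet A B' T') (ALam A B' T' k) := by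
  refine ⟨fun p hp => ((mem_ALam_iff hyp).mp hp).1, ?_, ?_, ?_⟩
  · intro h0
    obtain ⟨_, S, dS, m, hsub⟩ := (mem_ALam_iff hyp).mp h0
    have hS : S = ∅ := diag_set_unique dS (diag_zero (e := e))
    obtain ⟨v, hv⟩ := KSet_nonempty k m
    exact absurd (hS ▸ hsub hv) (Set.notMem_empty v)
  · intro a ha f hf haf
    obtain ⟨haE, Sa, da, m, hsub⟩ := (mem_ALam_iff hyp).mp ha
    obtain ⟨Sf, df⟩ := ESet_diag hyp hf
    have hSS : Sa ∩ Sf = Sa :=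
      diag_set_unique (diag_mul da df) (show DiagOn e (a * f) Sa by rw [haf]; exact da)
    exact (mem_ALam_iff hyp).mpr
      ⟨hf, Sf, df, m, fun v hv => (Set.inter_eq_left.mp hSS) (hsub hv)⟩
  · intro a ha b hb
    obtain ⟨haE, Sa, da, m, hsuba⟩ := (mem_ALam_iff hyp).mp ha
    obtain ⟨hbE, Sb, db, m', hsubb⟩ := (mem_ALam_iff hyp).mp hb
    exact (mem_ALam_iff hyp).mpr ⟨mul_mem_ESet hyp haE hbE, Sa ∩ Sb, diag_mul da db,
      max m m', fun v hv => ⟨hsuba (KSet_antitone (le_max_left m m') hv),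
        hsubb (KSet_antitone (le_max_right m m') hv)⟩⟩

lemma ALam_ultra (hyp : ShiftHyp e A B' T') (k : Option ℕ × Option ℕ) :
    IsUltrafilterIn (ESet A B' T') (ALam A B' T' k) := by
  refine ⟨ALam_filter hyp k, fun B hB hsub => Set.Subset.antisymm (fun f hf => ?_) hsub⟩
  have hfE : f ∈ ESet A B' T' := hB.1 hf
  obtain ⟨o1, o2⟩ := k
  rcases mem_ESet_iff.mp hfE with ((((rfl | ⟨n, rfl⟩) | ⟨n, hn, rfl⟩) | ⟨n, hn, rfl⟩) | ⟨n, rfl⟩) <;>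
    rcases o1 with _ | k1 <;> rcases o2 with _ | k2
  -- f = 0 : impossible
  · exact absurd hf hB.2.1
  · exact absurd hf hB.2.1
  · exact absurd hf hB.2.1
  · exact absurd hf hB.2.1
  -- f = P1 n
  · exact ⟨n, rfl⟩
  · by_cases h : n ≤ k2
    · exact Or.inl ⟨n, h, rfl⟩
    · exact ((filter_absurd hB hf (hsub (Or.inr ⟨k2, le_refl k2, rfl⟩)) (diag_P1 hyp n)
        (diag_P2 hyp (k2, k2)) (by
          rw [Set.eq_empty_iff_forall_notMem]
          rintro ⟨i, j⟩ ⟨h1, h2⟩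
          simp [Qs1, Qs2] at h1 h2
          omega))).elim
  · by_cases h : n ≤ k1
    · exact Or.inl ⟨n, h, rfl⟩
    · exact ((filter_absurd hB hf (hsub (Or.inr ⟨k1, le_refl k1, rfl⟩)) (diag_P1 hyp n)
        (diag_P3 hyp (k1, k1)) (by
          rw [Set.eq_empty_iff_forall_notMem]
          rintro ⟨i, j⟩ ⟨h1, h2⟩
          simp [Qs1, Qs3] at h1 h2
          omega))).elim
  · by_cases h : n ≤ k1 ∧ n ≤ k2
    · exact Or.inl (Or.inl (Or.inl ⟨n, le_min h.1 h.2, rfl⟩))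
    · exact ((filter_absurd hB hf (hsub (Or.inr rfl)) (diag_P1 hyp n)
        (diag_P4 hyp (k1, k2)) (by
          rw [Set.eq_empty_iff_forall_notMem]
          rintro ⟨i, j⟩ ⟨h1, h2⟩
          simp [Qs1, Qs4, Prod.ext_iff] at h1 h2
          omega))).elim
  -- f = P2 n
  · exact ((filter_absurd hB hf (hsub ⟨n.2 + 1, rfl⟩) (diag_P2 hyp n)
      (diag_P1 hyp (n.2 + 1)) (by
        rw [Set.eq_empty_iff_forall_notMem]
        rintro ⟨i, j⟩ ⟨h1, h2⟩
        simp [Qs1, Qs2] at h1 h2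
        omega))).elim
  · by_cases h : n.2 = k2
    · exact Or.inr ⟨n.1, by omega, by rw [show (n.1, k2) = n from Prod.ext rfl h.symm]⟩
    · exact ((filter_absurd hB hf (hsub (Or.inr ⟨k2, le_refl k2, rfl⟩)) (diag_P2 hyp n)
        (diag_P2 hyp (k2, k2)) (by
          rw [Set.eq_empty_iff_forall_notMem]
          rintro ⟨i, j⟩ ⟨h1, h2⟩
          simp [Qs2] at h1 h2
          omega))).elim
  · exact ((filter_absurd hB hf (hsub (Or.inr ⟨max k1 (n.2 + 1), le_max_left _ _, rfl⟩))
      (diag_P2 hyp n) (diag_P3 hyp (k1, max k1 (n.2 + 1))) (by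
        rw [Set.eq_empty_iff_forall_notMem]
        rintro ⟨i, j⟩ ⟨h1, h2⟩
        simp [Qs2, Qs3] at h1 h2
        omega))).elim
  · by_cases h : n.1 ≤ k1 ∧ n.2 = k2
    · exact Or.inl (Or.inl (Or.inr ⟨n, h.2, hn, h.1, rfl⟩))
    · exact ((filter_absurd hB hf (hsub (Or.inr rfl)) (diag_P2 hyp n)
        (diag_P4 hyp (k1, k2)) (by
          rw [Set.eq_empty_iff_forall_notMem]
          rintro ⟨i, j⟩ ⟨h1, h2⟩
          simp [Qs2, Qs4, Prod.ext_iff] at h1 h2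
          omega))).elim
  -- f = P3 n
  · exact ((filter_absurd hB hf (hsub ⟨n.1 + 1, rfl⟩) (diag_P3 hyp n)
      (diag_P1 hyp (n.1 + 1)) (by
        rw [Set.eq_empty_iff_forall_notMem]
        rintro ⟨i, j⟩ ⟨h1, h2⟩
        simp [Qs1, Qs3] at h1 h2
        omega))).elim
  · exact ((filter_absurd hB hf (hsub (Or.inr ⟨max k2 (n.1 + 1), le_max_left _ _, rfl⟩))
      (diag_P3 hyp n) (diag_P2 hyp (max k2 (n.1 + 1), k2)) (by
        rw [Set.eq_empty_iff_forall_notMem]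
        rintro ⟨i, j⟩ ⟨h1, h2⟩
        simp [Qs2, Qs3] at h1 h2
        omega))).elim
  · by_cases h : n.1 = k1
    · exact Or.inr ⟨n.2, by omega, by rw [show (k1, n.2) = n from Prod.ext h.symm rfl]⟩
    · exact ((filter_absurd hB hf (hsub (Or.inr ⟨k1, le_refl k1, rfl⟩)) (diag_P3 hyp n)
        (diag_P3 hyp (k1, k1)) (by
          rw [Set.eq_empty_iff_forall_notMem]
          rintro ⟨i, j⟩ ⟨h1, h2⟩
          simp [Qs3] at h1 h2
          omega))).elim
  · by_cases h : n.1 = k1 ∧ n.2 ≤ k2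
    · exact Or.inl (Or.inr ⟨n, h.1, hn, h.2, rfl⟩)
    · exact ((filter_absurd hB hf (hsub (Or.inr rfl)) (diag_P3 hyp n)
        (diag_P4 hyp (k1, k2)) (by
          rw [Set.eq_empty_iff_forall_notMem]
          rintro ⟨i, j⟩ ⟨h1, h2⟩
          simp [Qs3, Qs4, Prod.ext_iff] at h1 h2
          omega))).elim
  -- f = P4 n
  · exact ((filter_absurd hB hf (hsub ⟨n.1 + n.2 + 1, rfl⟩) (diag_P4 hyp n)
      (diag_P1 hyp (n.1 + n.2 + 1)) (by
        rw [Set.eq_empty_iff_forall_notMem]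
        rintro ⟨i, j⟩ ⟨h1, h2⟩
        simp [Qs1, Qs4, Prod.ext_iff] at h1 h2
        omega))).elim
  · exact ((filter_absurd hB hf (hsub (Or.inr ⟨max k2 (n.1 + 1), le_max_left _ _, rfl⟩))
      (diag_P4 hyp n) (diag_P2 hyp (max k2 (n.1 + 1), k2)) (by
        rw [Set.eq_empty_iff_forall_notMem]
        rintro ⟨i, j⟩ ⟨h1, h2⟩
        simp [Qs2, Qs4, Prod.ext_iff] at h1 h2
        omega))).elim
  · exact ((filter_absurd hB hf (hsub (Or.inr ⟨max k1 (n.2 + 1), le_max_left _ _, rfl⟩))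
      (diag_P4 hyp n) (diag_P3 hyp (k1, max k1 (n.2 + 1))) (by
        rw [Set.eq_empty_iff_forall_notMem]
        rintro ⟨i, j⟩ ⟨h1, h2⟩
        simp [Qs3, Qs4, Prod.ext_iff] at h1 h2
        omega))).elim
  · by_cases h : n.1 = k1 ∧ n.2 = k2
    · exact Or.inr (by rw [show n = (k1, k2) from Prod.ext h.1 h.2]; rfl)
    · exact ((filter_absurd hB hf (hsub (Or.inr rfl)) (diag_P4 hyp n)
        (diag_P4 hyp (k1, k2)) (by
          rw [Set.eq_empty_iff_forall_notMem]
          rintro ⟨i, j⟩ ⟨h1, h2⟩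
          simp [Qs4, Prod.ext_iff] at h1 h2
          omega))).elim


lemma ultra_eq_ALam (hyp : ShiftHyp e A B' T') {B : Set (H →L[ℂ] H)}
    (hU : IsUltrafilterIn (ESet A B' T') B) : ∃ k, B = ALam A B' T' k := by
  obtain ⟨hB, hmax⟩ := hU
  by_cases h4 : ∃ n, P4 A B' T' n ∈ B
  · obtain ⟨n, hn4⟩ := h4
    refine ⟨(some n.1, some n.2), (hmax _ (ALam_filter hyp _) (fun f hf => ?_)).symm⟩
    have hfE : f ∈ ESet A B' T' := hB.1 hf
    obtain ⟨Sf, df⟩ := ESet_diag hyp hfE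
    by_cases hmem : (n.1, n.2) ∈ Sf
    · exact (mem_ALam_fin_iff hyp).mpr ⟨hfE, Sf, df, hmem⟩
    · exact ((filter_absurd hB hf hn4 df (diag_P4 hyp n) (by
        rw [Set.eq_empty_iff_forall_notMem]
        rintro ⟨i, j⟩ ⟨h1, h2⟩
        rw [show ((i, j) : ℕ × ℕ) = n from h1] at h2
        exact hmem (by rwa [Prod.mk.eta]))).elim)
  · by_cases h2 : ∃ n, P2 A B' T' n ∈ B
    · obtain ⟨n, hn2⟩ := h2
      refine ⟨(none, some n.2), (hmax _ (ALam_filter hyp _) (fun f hf => ?_)).symm⟩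
      have hfE : f ∈ ESet A B' T' := hB.1 hf
      rcases mem_ESet_iff.mp hfE with
        ((((rfl | ⟨a, rfl⟩) | ⟨m, hm, rfl⟩) | ⟨m, hm, rfl⟩) | ⟨m, rfl⟩)
      · exact absurd hf hB.2.1
      · by_cases h : a ≤ n.2
        · exact Or.inl ⟨a, h, rfl⟩
        · exact ((filter_absurd hB hf hn2 (diag_P1 hyp a) (diag_P2 hyp n) (by
            rw [Set.eq_empty_iff_forall_notMem]
            rintro ⟨i, j⟩ ⟨h1, h2⟩
            simp [Qs1, Qs2] at h1 h2
            omega)).elim)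
      · by_cases h : m.2 = n.2
        · exact Or.inr ⟨m.1, by omega, by rw [show (m.1, n.2) = m from Prod.ext rfl h.symm]⟩
        · exact ((filter_absurd hB hf hn2 (diag_P2 hyp m) (diag_P2 hyp n) (by
            rw [Set.eq_empty_iff_forall_notMem]
            rintro ⟨i, j⟩ ⟨h1, h2⟩
            simp [Qs2] at h1 h2
            omega)).elim)
      · by_cases hc : n.1 ≤ m.1 ∧ m.2 ≤ n.2
        · have hg : P3 A B' T' m * P2 A B' T' n ∈ B := hB.2.2.2 _ hf _ hn2
          have heq : P3 A B' T' m * P2 A B' T' n = P4 A B' T' (m.1, n.2) :=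
            eq_of_diag_sets (diag_mul (diag_P3 hyp m) (diag_P2 hyp n))
              (diag_P4 hyp (m.1, n.2)) (by
                ext ⟨i, j⟩
                simp [Qs2, Qs3, Qs4, Prod.ext_iff]
                omega)
          rw [heq] at hg
          exact absurd ⟨(m.1, n.2), hg⟩ h4
        · exact ((filter_absurd hB hf hn2 (diag_P3 hyp m) (diag_P2 hyp n) (by
            rw [Set.eq_empty_iff_forall_notMem]
            rintro ⟨i, j⟩ ⟨h1, h2⟩
            simp [Qs2, Qs3] at h1 h2
            omega)).elim)
      · exact absurd ⟨m, hf⟩ h4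
    · by_cases h3 : ∃ n, P3 A B' T' n ∈ B
      · obtain ⟨n, hn3⟩ := h3
        refine ⟨(some n.1, none), (hmax _ (ALam_filter hyp _) (fun f hf => ?_)).symm⟩
        have hfE : f ∈ ESet A B' T' := hB.1 hf
        rcases mem_ESet_iff.mp hfE with
          ((((rfl | ⟨a, rfl⟩) | ⟨m, hm, rfl⟩) | ⟨m, hm, rfl⟩) | ⟨m, rfl⟩)
        · exact absurd hf hB.2.1
        · by_cases h : a ≤ n.1
          · exact Or.inl ⟨a, h, rfl⟩
          · exact ((filter_absurd hB hf hn3 (diag_P1 hyp a) (diag_P3 hyp n) (by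
              rw [Set.eq_empty_iff_forall_notMem]
              rintro ⟨i, j⟩ ⟨h1, h2⟩
              simp [Qs1, Qs3] at h1 h2
              omega)).elim)
        · by_cases hc : m.1 ≤ n.1 ∧ n.2 ≤ m.2
          · have hg : P2 A B' T' m * P3 A B' T' n ∈ B := hB.2.2.2 _ hf _ hn3
            have heq : P2 A B' T' m * P3 A B' T' n = P4 A B' T' (n.1, m.2) :=
              eq_of_diag_sets (diag_mul (diag_P2 hyp m) (diag_P3 hyp n))
                (diag_P4 hyp (n.1, m.2)) (by
                  ext ⟨i, j⟩
                  simp [Qs2, Qs3, Qs4, Prod.ext_iff]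
                  omega)
            rw [heq] at hg
            exact absurd ⟨(n.1, m.2), hg⟩ h4
          · exact ((filter_absurd hB hf hn3 (diag_P2 hyp m) (diag_P3 hyp n) (by
              rw [Set.eq_empty_iff_forall_notMem]
              rintro ⟨i, j⟩ ⟨h1, h2⟩
              simp [Qs2, Qs3] at h1 h2
              omega)).elim)
        · by_cases h : m.1 = n.1
          · exact Or.inr ⟨m.2, by omega, by rw [show (n.1, m.2) = m from Prod.ext h.symm rfl]⟩
          · exact ((filter_absurd hB hf hn3 (diag_P3 hyp m) (diag_P3 hyp n) (by
              rw [Set.eq_empty_iff_forall_notMem]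
              rintro ⟨i, j⟩ ⟨h1, h2⟩
              simp [Qs3] at h1 h2
              omega)).elim)
        · exact absurd ⟨m, hf⟩ h4
      · refine ⟨(none, none), (hmax _ (ALam_filter hyp _) (fun f hf => ?_)).symm⟩
        have hfE : f ∈ ESet A B' T' := hB.1 hf
        rcases mem_ESet_iff.mp hfE with
          ((((rfl | ⟨a, rfl⟩) | ⟨m, hm, rfl⟩) | ⟨m, hm, rfl⟩) | ⟨m, rfl⟩)
        · exact absurd hf hB.2.1
        · exact ⟨a, rfl⟩
        · exact absurd ⟨m, hf⟩ h2
        · exact absurd ⟨m, hf⟩ h3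
        · exact absurd ⟨m, hf⟩ h4


lemma G4 (hyp : ShiftHyp e A B' T') {a b : ℕ} {k : Option ℕ × Option ℕ}
    (h : P4 A B' T' (a, b) ∈ ALam A B' T' k) : k = (some a, some b) := by
  obtain ⟨hE, S, dS, m, hsub⟩ := (mem_ALam_iff hyp).mp h
  have hS : S = Qs4 (a, b) := diag_set_unique dS (diag_P4 hyp (a, b))
  subst hS
  obtain ⟨o1, o2⟩ := k
  rcases o1 with _ | k1 <;> rcases o2 with _ | k2
  · have h1 := hsub (show (m, m) ∈ KSet (none, none) m from ⟨le_refl m, le_refl m⟩)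
    have h2 := hsub (show (m + 1, m) ∈ KSet (none, none) m from ⟨by omega, le_refl m⟩)
    have e1 := Prod.ext_iff.mp h1
    have e2 := Prod.ext_iff.mp h2
    omega
  · have h1 := hsub (show (m, k2) ∈ KSet (none, some k2) m from ⟨le_refl m, rfl⟩)
    have h2 := hsub (show (m + 1, k2) ∈ KSet (none, some k2) m from ⟨by omega, rfl⟩)
    have e1 := Prod.ext_iff.mp h1
    have e2 := Prod.ext_iff.mp h2
    omega
  · have h1 := hsub (show (k1, m) ∈ KSet (some k1, none) m from ⟨rfl, le_refl m⟩)
    have h2 := hsub (show (k1, m + 1) ∈ KSet (some k1, none) m from ⟨rfl, by omega⟩)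
    have e1 := Prod.ext_iff.mp h1
    have e2 := Prod.ext_iff.mp h2
    omega
  · have h1 := hsub rfl
    have e1 := Prod.ext_iff.mp h1
    simp only [Prod.mk.injEq, Option.some.injEq]
    exact ⟨e1.1, e1.2⟩

lemma G3' (hyp : ShiftHyp e A B' T') {a b : ℕ} {o2 : Option ℕ}
    (h : P3 A B' T' (a, b) ∈ ALam A B' T' (none, o2)) : False := by
  obtain ⟨hE, S, dS, m, hsub⟩ := (mem_ALam_iff hyp).mp h
  have hS : S = Qs3 (a, b) := diag_set_unique dS (diag_P3 hyp (a, b))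
  subst hS
  rcases o2 with _ | k2
  · have h1 := (hsub (show (m, max m b) ∈ KSet (none, none) m from
      ⟨le_refl m, le_max_left _ _⟩)).1
    have h2 := (hsub (show (m + 1, max m b) ∈ KSet (none, none) m from
      ⟨by omega, le_max_left _ _⟩)).1
    simp at h1 h2
    omega
  · have h1 := (hsub (show (m, k2) ∈ KSet (none, some k2) m from ⟨le_refl m, rfl⟩)).1
    have h2 := (hsub (show (m + 1, k2) ∈ KSet (none, some k2) m from ⟨by omega, rfl⟩)).1
    simp at h1 h2
    omega

lemma G2' (hyp : ShiftHyp e A B' T') {a b : ℕ} {o1 : Option ℕ}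
    (h : P2 A B' T' (a, b) ∈ ALam A B' T' (o1, none)) : False := by
  obtain ⟨hE, S, dS, m, hsub⟩ := (mem_ALam_iff hyp).mp h
  have hS : S = Qs2 (a, b) := diag_set_unique dS (diag_P2 hyp (a, b))
  subst hS
  rcases o1 with _ | k1
  · have h1 := (hsub (show (max m a, m) ∈ KSet (none, none) m from
      ⟨le_max_left _ _, le_refl m⟩)).2
    have h2 := (hsub (show (max m a, m + 1) ∈ KSet (none, none) m from
      ⟨le_max_left _ _, by omega⟩)).2
    simp at h1 h2
    omega
  · have h1 := (hsub (show (k1, m) ∈ KSet (some k1, none) m from ⟨rfl, le_refl m⟩)).2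
    have h2 := (hsub (show (k1, m + 1) ∈ KSet (some k1, none) m from ⟨rfl, by omega⟩)).2
    simp at h1 h2
    omega

lemma G3a (hyp : ShiftHyp e A B' T') {a b c : ℕ}
    (h : P3 A B' T' (a, b) ∈ ALam A B' T' (some c, none)) : c = a := by
  obtain ⟨hE, S, dS, m, hsub⟩ := (mem_ALam_iff hyp).mp h
  have hS : S = Qs3 (a, b) := diag_set_unique dS (diag_P3 hyp (a, b))
  subst hS
  exact (hsub (show (c, max m b) ∈ KSet (some c, none) m from ⟨rfl, le_max_left _ _⟩)).1

lemma G2a (hyp : ShiftHyp e A B' T') {a b c : ℕ}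
    (h : P2 A B' T' (a, b) ∈ ALam A B' T' (none, some c)) : c = b := by
  obtain ⟨hE, S, dS, m, hsub⟩ := (mem_ALam_iff hyp).mp h
  have hS : S = Qs2 (a, b) := diag_set_unique dS (diag_P2 hyp (a, b))
  subst hS
  exact (hsub (show (max m a, c) ∈ KSet (none, some c) m from ⟨le_max_left _ _, rfl⟩)).2

lemma ALam_inj (hyp : ShiftHyp e A B' T') {k k' : Option ℕ × Option ℕ}
    (h : ALam A B' T' k = ALam A B' T' k') : k = k' := by
  obtain ⟨o1, o2⟩ := k
  obtain ⟨o1', o2'⟩ := k'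
  rcases o1 with _ | a <;> rcases o2 with _ | b <;> rcases o1' with _ | c <;> rcases o2' with _ | d
  -- (none,none) vs *
  · rfl
  · exact absurd (h ▸ (show P2 A B' T' (d, d) ∈ ALam A B' T' (none, some d) from
      Or.inr ⟨d, le_refl d, rfl⟩)) (fun hc => G2' hyp hc)
  · exact absurd (h ▸ (show P3 A B' T' (c, c) ∈ ALam A B' T' (some c, none) from
      Or.inr ⟨c, le_refl c, rfl⟩)) (fun hc => G3' hyp hc)
  · have := G4 hyp (h ▸ (show P4 A B' T' (c, d) ∈ ALam A B' T' (some c, some d) from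
      Or.inr rfl))
    simp at this
  -- (none, some b) vs *
  · exact absurd (h ▸ (show P2 A B' T' (b, b) ∈ ALam A B' T' (none, some b) from
      Or.inr ⟨b, le_refl b, rfl⟩)) (fun hc => G2' hyp hc)
  · have := G2a hyp (h ▸ (show P2 A B' T' (b, b) ∈ ALam A B' T' (none, some b) from
      Or.inr ⟨b, le_refl b, rfl⟩))
    rw [this]
  · exact absurd (h ▸ (show P2 A B' T' (b, b) ∈ ALam A B' T' (none, some b) from
      Or.inr ⟨b, le_refl b, rfl⟩)) (fun hc => G2' hyp hc)
  · have := G4 hyp (h ▸ (show P4 A B' T' (c, d) ∈ ALam A B' T' (some c, some d) from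
      Or.inr rfl))
    simp at this
  -- (some a, none) vs *
  · exact absurd (h ▸ (show P3 A B' T' (a, a) ∈ ALam A B' T' (some a, none) from
      Or.inr ⟨a, le_refl a, rfl⟩)) (fun hc => G3' hyp hc)
  · exact absurd (h ▸ (show P3 A B' T' (a, a) ∈ ALam A B' T' (some a, none) from
      Or.inr ⟨a, le_refl a, rfl⟩)) (fun hc => G3' hyp hc)
  · have := G3a hyp (h ▸ (show P3 A B' T' (a, a) ∈ ALam A B' T' (some a, none) from
      Or.inr ⟨a, le_refl a, rfl⟩))
    rw [this]
  · have := G4 hyp (h ▸ (show P4 A B' T' (c, d) ∈ ALam A B' T' (some c, some d) from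
      Or.inr rfl))
    simp at this
  -- (some a, some b) vs *
  · have := G4 hyp (h.symm ▸ (show P4 A B' T' (a, b) ∈ ALam A B' T' (some a, some b) from
      Or.inr rfl))
    simp at this
  · have := G4 hyp (h.symm ▸ (show P4 A B' T' (a, b) ∈ ALam A B' T' (some a, some b) from
      Or.inr rfl))
    simp at this
  · have := G4 hyp (h.symm ▸ (show P4 A B' T' (a, b) ∈ ALam A B' T' (some a, some b) from
      Or.inr rfl))
    simp at this
  · have := G4 hyp (h.symm ▸ (show P4 A B' T' (a, b) ∈ ALam A B' T' (some a, some b) from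
      Or.inr rfl))
    simp at this
    simp [this.1, this.2]


lemma M0 (hyp : ShiftHyp e A B' T') (k : Option ℕ × Option ℕ) :
    (0 : H →L[ℂ] H) ∉ ALam A B' T' k := (ALam_filter hyp k).2.1

lemma M1 (hyp : ShiftHyp e A B' T') (n : ℕ) (k : Option ℕ × Option ℕ) :
    P1 A B' T' (n, n) ∈ ALam A B' T' k ↔
      (∀ m, k.1 = some m → n ≤ m) ∧ (∀ m, k.2 = some m → n ≤ m) := by
  constructor
  · intro h
    obtain ⟨hE, S, dS, m, hsub⟩ := (mem_ALam_iff hyp).mp h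
    have hS : S = Qs1 n := diag_set_unique dS (diag_P1 hyp n)
    subst hS
    obtain ⟨o1, o2⟩ := k
    rcases o1 with _ | k1 <;> rcases o2 with _ | k2
    · exact ⟨fun m hm => by simp at hm, fun m hm => by simp at hm⟩
    · have := hsub (show (m, k2) ∈ KSet (none, some k2) m from ⟨le_refl m, rfl⟩)
      exact ⟨fun m hm => by simp at hm,
        fun m' hm' => by rw [← Option.some_inj.mp hm']; exact this.2⟩
    · have := hsub (show (k1, m) ∈ KSet (some k1, none) m from ⟨rfl, le_refl m⟩)
      exact ⟨fun m' hm' => by rw [← Option.some_inj.mp hm']; exact this.1,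
        fun m hm => by simp at hm⟩
    · have := hsub (show (k1, k2) ∈ KSet (some k1, some k2) m from rfl)
      exact ⟨fun m' hm' => by rw [← Option.some_inj.mp hm']; exact this.1,
        fun m' hm' => by rw [← Option.some_inj.mp hm']; exact this.2⟩
  · rintro ⟨h1, h2⟩
    refine (mem_ALam_iff hyp).mpr ⟨memE_P1 n, Qs1 n, diag_P1 hyp n, n, ?_⟩
    obtain ⟨o1, o2⟩ := k
    rcases o1 with _ | k1 <;> rcases o2 with _ | k2
    · exact fun v hv => hv
    · rintro ⟨i, j⟩ ⟨hv1, hv2⟩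
      exact ⟨hv1, by rw [hv2]; exact h2 k2 rfl⟩
    · rintro ⟨i, j⟩ ⟨hv1, hv2⟩
      exact ⟨by rw [hv1]; exact h1 k1 rfl, hv2⟩
    · rintro v rfl
      exact ⟨h1 k1 rfl, h2 k2 rfl⟩

lemma M2 (hyp : ShiftHyp e A B' T') {n : ℕ × ℕ} (hn : n.2 ≤ n.1) (k : Option ℕ × Option ℕ) :
    P2 A B' T' n ∈ ALam A B' T' k ↔
      k.2 = some n.2 ∧ ∀ m, k.1 = some m → n.1 ≤ m := by
  constructor
  · intro h
    obtain ⟨o1, o2⟩ := k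
    rcases o2 with _ | k2
    · exact (G2' hyp h).elim
    rcases o1 with _ | k1
    · have := G2a hyp h
      exact ⟨by rw [this], fun m hm => by simp at hm⟩
    · obtain ⟨hE, S, dS, hp⟩ := (mem_ALam_fin_iff hyp).mp h
      have hS : S = Qs2 n := diag_set_unique dS (diag_P2 hyp n)
      subst hS
      exact ⟨congrArg some hp.2, fun m hm => by rw [← Option.some_inj.mp hm]; exact hp.1⟩
  · rintro ⟨hk2, hk1⟩
    obtain ⟨o1, o2⟩ := k
    simp only at hk2
    subst hk2
    rcases o1 with _ | k1
    · exact Or.inr ⟨n.1, hn, by rw [Prod.mk.eta]⟩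
    · exact Or.inl (Or.inl (Or.inr ⟨n, rfl, hn, hk1 k1 rfl, rfl⟩))

lemma M3 (hyp : ShiftHyp e A B' T') {n : ℕ × ℕ} (hn : n.1 ≤ n.2) (k : Option ℕ × Option ℕ) :
    P3 A B' T' n ∈ ALam A B' T' k ↔
      k.1 = some n.1 ∧ ∀ m, k.2 = some m → n.2 ≤ m := by
  constructor
  · intro h
    obtain ⟨o1, o2⟩ := k
    rcases o1 with _ | k1
    · exact (G3' hyp h).elim
    rcases o2 with _ | k2
    · have := G3a hyp h
      exact ⟨by rw [this], fun m hm => by simp at hm⟩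
    · obtain ⟨hE, S, dS, hp⟩ := (mem_ALam_fin_iff hyp).mp h
      have hS : S = Qs3 n := diag_set_unique dS (diag_P3 hyp n)
      subst hS
      exact ⟨congrArg some hp.1, fun m hm => by rw [← Option.some_inj.mp hm]; exact hp.2⟩
  · rintro ⟨hk1, hk2⟩
    obtain ⟨o1, o2⟩ := k
    simp only at hk1
    subst hk1
    rcases o2 with _ | k2
    · exact Or.inr ⟨n.2, hn, by rw [Prod.mk.eta]⟩
    · exact Or.inl (Or.inr ⟨n, rfl, hn, hk2 k2 rfl, rfl⟩)

lemma M4 (hyp : ShiftHyp e A B' T') (n : ℕ × ℕ) (k : Option ℕ × Option ℕ) :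
    P4 A B' T' n ∈ ALam A B' T' k ↔ k = (some n.1, some n.2) := by
  constructor
  · intro h
    have := G4 hyp (show P4 A B' T' (n.1, n.2) ∈ ALam A B' T' k by rwa [Prod.mk.eta])
    exact this
  · rintro rfl
    exact Or.inr (show P4 A B' T' n = P4 A B' T' (n.1, n.2) by rw [Prod.mk.eta])

def Uge (n : ℕ) : Set (OnePoint ℕ) := {x | ∀ m : ℕ, x = (m : OnePoint ℕ) → n ≤ m}

lemma Uge_eq (n : ℕ) :
    Uge n = ((fun (m : ℕ) => (m : OnePoint ℕ)) '' (Set.Iio n))ᶜ := by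
  ext x
  cases x with
  | infty =>
    simp only [Uge, Set.mem_setOf_eq, Set.mem_compl_iff, Set.mem_image]
    constructor
    · rintro _ ⟨m, _, hm⟩
      exact OnePoint.coe_ne_infty m hm
    · intro _ m hm
      exact (OnePoint.infty_ne_coe m hm).elim
  | coe j =>
    simp only [Uge, Set.mem_setOf_eq, Set.mem_compl_iff, Set.mem_image, Set.mem_Iio]
    constructor
    · intro h hc
      obtain ⟨m, hm, hmeq⟩ := hc
      have : m = j := Option.some_inj.mp hmeq
      have := h j rfl
      omega
    · intro h m hm
      have : j = m := Option.some_inj.mp hm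
      subst this
      by_contra hc
      exact h ⟨j, by omega, rfl⟩

lemma clopen_Uge (n : ℕ) : IsClopen (Uge n) := by
  rw [Uge_eq]
  constructor
  · exact (OnePoint.isOpen_image_coe.mpr (isOpen_discrete _)).isClosed_compl
  · exact OnePoint.isOpen_compl_image_coe.mpr ⟨isClosed_discrete _, (Set.finite_Iio n).isCompact⟩

lemma clopen_single (m : ℕ) : IsClopen ({(m : OnePoint ℕ)} : Set (OnePoint ℕ)) := by
  constructor
  · exact isClosed_singleton
  · rw [← Set.image_singleton]
    exact OnePoint.isOpen_image_coe.mpr (isOpen_discrete _)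

lemma cont_decide_mem {Z : Type*} [TopologicalSpace Z] {W : Set Z}
    [inst : ∀ z, Decidable (z ∈ W)] (h : IsClopen W) :
    Continuous (fun z => decide (z ∈ W)) := by
  have hb := (continuous_boolIndicator_iff_isClopen W).mpr h
  have : (fun z => decide (z ∈ W)) = W.boolIndicator := by
    funext z
    by_cases hz : z ∈ W <;> simp [Set.boolIndicator, hz]
  rw [this]
  exact hb

lemma charOf_inj {X : Type} {s t : Set X} (h : charOf s = charOf t) : s = t := by
  ext x
  have := congrFun h x
  simp only [charOf] at this
  exact decide_eq_decide.mp this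


theorem stmt11 {H : Type} [NormedAddCommGroup H] [InnerProductSpace ℂ H]
    [CompleteSpace H] (e : HilbertBasis (ℕ × ℕ × ℤ) ℂ H) (A B' : H →L[ℂ] H)
    (T' : ℤ → (H →L[ℂ] H)) (hyp : ShiftHyp e A B' T') :
    ∃ h : OnePoint ℕ × OnePoint ℕ ≃ₜ
        {x : (H →L[ℂ] H) → Bool //
          ∃ Aset, IsUltrafilterIn (ESet A B' T') Aset ∧ x = charOf Aset},
      ∀ k : OnePoint ℕ × OnePoint ℕ,
        (h k : (H →L[ℂ] H) → Bool) = charOf (ALam A B' T' (k : Option ℕ × Option ℕ)) := by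
  classical
  let φ : OnePoint ℕ × OnePoint ℕ →
      {x : (H →L[ℂ] H) → Bool // ∃ Aset, IsUltrafilterIn (ESet A B' T') Aset ∧ x = charOf Aset} :=
    fun k => ⟨charOf (ALam A B' T' k), ALam A B' T' k, ALam_ultra hyp k, rfl⟩
  have hinj : Function.Injective φ := by
    intro k k' hkk
    have h1 : charOf (ALam A B' T' k) = charOf (ALam A B' T' k') := congrArg Subtype.val hkk
    exact ALam_inj hyp (charOf_inj h1)
  have hsurj : Function.Surjective φ := by
    rintro ⟨x, Aset, hUF, rfl⟩
    obtain ⟨k, rfl⟩ := ultra_eq_ALam hyp hUF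
    exact ⟨k, rfl⟩
  have hcont0 : Continuous (fun k : OnePoint ℕ × OnePoint ℕ => charOf (ALam A B' T' k)) := by
    apply continuous_pi
    intro p
    by_cases hp : p ∈ ESet A B' T'
    · rcases mem_ESet_iff.mp hp with ((((rfl | ⟨n, rfl⟩) | ⟨n, hn, rfl⟩) | ⟨n, hn, rfl⟩) | ⟨n, rfl⟩)
      · have hfn : (fun k : OnePoint ℕ × OnePoint ℕ => charOf (ALam A B' T' k) 0)
            = fun _ => false := by
          funext k
          exact decide_eq_false_iff_not.mpr (M0 hyp k)
        rw [hfn]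
        exact continuous_const
      · have hfn : (fun k : OnePoint ℕ × OnePoint ℕ => charOf (ALam A B' T' k) (P1 A B' T' (n, n)))
            = fun k => decide (k ∈ (Uge n) ×ˢ (Uge n)) := by
          funext k
          exact decide_eq_decide.mpr (M1 hyp n k)
        rw [hfn]
        exact cont_decide_mem ((clopen_Uge n).prod (clopen_Uge n))
      · have hfn : (fun k : OnePoint ℕ × OnePoint ℕ => charOf (ALam A B' T' k) (P2 A B' T' n))
            = fun k => decide (k ∈ (Uge n.1) ×ˢ ({((n.2 : ℕ) : OnePoint ℕ)} : Set (OnePoint ℕ))) := by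
          funext k
          exact decide_eq_decide.mpr ((M2 hyp hn k).trans ⟨fun h => ⟨h.2, h.1⟩, fun h => ⟨h.2, h.1⟩⟩)
        rw [hfn]
        exact cont_decide_mem ((clopen_Uge n.1).prod (clopen_single n.2))
      · have hfn : (fun k : OnePoint ℕ × OnePoint ℕ => charOf (ALam A B' T' k) (P3 A B' T' n))
            = fun k => decide (k ∈ ({((n.1 : ℕ) : OnePoint ℕ)} : Set (OnePoint ℕ)) ×ˢ (Uge n.2)) := by
          funext k
          exact decide_eq_decide.mpr (M3 hyp hn k)
        rw [hfn]
        exact cont_decide_mem ((clopen_single n.1).prod (clopen_Uge n.2))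
      · have hfn : (fun k : OnePoint ℕ × OnePoint ℕ => charOf (ALam A B' T' k) (P4 A B' T' n))
            = fun k => decide (k ∈ ({((n.1 : ℕ) : OnePoint ℕ)} : Set (OnePoint ℕ)) ×ˢ
              ({((n.2 : ℕ) : OnePoint ℕ)} : Set (OnePoint ℕ))) := by
          funext k
          exact decide_eq_decide.mpr ((M4 hyp n k).trans Prod.ext_iff)
        rw [hfn]
        exact cont_decide_mem ((clopen_single n.1).prod (clopen_single n.2))
    · have hfn : (fun k : OnePoint ℕ × OnePoint ℕ => charOf (ALam A B' T' k) p)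
          = fun _ => false := by
        funext k
        exact decide_eq_false_iff_not.mpr (fun hc => hp ((mem_ALam_iff hyp).mp hc).1)
      rw [hfn]
      exact continuous_const
  have hcont : Continuous φ := hcont0.subtype_mk _
  exact ⟨Continuous.homeoOfEquivCompactToT2 (f := Equiv.ofBijective φ ⟨hinj, hsurj⟩) hcont,
    fun k => rfl⟩


end SOq
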